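/- Let m ≥ 1 and let N₁, …, N_m be positive integers with N = N₁ + ⋯ + N_m; set N₀ = N_m. Let k and l₁, …, l_m be integers with Σ_{s=1}^m l_s = 0, define K_s = k + Σ_{t<s} l_t, and suppose K_s ≥ 0 for all s (the monopole-number inequalities k ≥ 0, k + l₁ ≥ 0, …, k + l₁ + ⋯ + l_{m−1} ≥ 0). Let Q = 4N·k + 2·Σ_{s=1}^m Σ_{t=1}^m sign(t−s)·N_t·l_s. Then: (a) Q ≥ 4·Σ_{s=1}^m K_s ≥ 0; (b) Q = 0 if and only if k = 0 and l_s = 0 for all s; (c) if Q > 0 then Q ≥ min_{s} 2(N_{s−1} + N_s) ≥ 4. -/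

import Mathlib

/-- With `N = N₁ + ⋯ + N_m` (indices cyclic, `N₀ = N_m`), integers `k`, `l₁,…,l_m` with
`∑ l_s = 0`, `K_s = k + ∑_{t<s} l_t` all nonnegative, and
`Q = 4Nk + 2 ∑_{s,t} sign(t−s) N_t l_s`: (a) `Q ≥ 4 ∑ K_s ≥ 0`; (b) `Q = 0` iff `k = 0` and
all `l_s = 0`; (c) if `Q > 0` then `Q ≥ min_s 2(N_{s−1} + N_s) ≥ 4`. -/
theorem dimension_bound_SUN
    (m : ℕ) [NeZero m] (Nv : Fin m → ℕ) (hNv : ∀ s, 0 < Nv s)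
    (N : ℕ) (hN : N = ∑ s, Nv s)
    (k : ℤ) (l : Fin m → ℤ) (hl : ∑ s, l s = 0)
    (K : Fin m → ℤ)
    (hK : ∀ s : Fin m, K s = k + ∑ t ∈ Finset.univ.filter (fun t => t < s), l t)
    (hKnonneg : ∀ s, 0 ≤ K s)
    (Q : ℤ)
    (hQ : Q = 4 * (N : ℤ) * k
      + 2 * ∑ s : Fin m, ∑ t : Fin m,
          (Int.sign (((t : ℕ) : ℤ) - ((s : ℕ) : ℤ))) * (Nv t : ℤ) * l s) :
    (4 * ∑ s, K s ≤ Q ∧ 0 ≤ 4 * ∑ s, K s)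
    ∧ (Q = 0 ↔ k = 0 ∧ ∀ s, l s = 0)
    ∧ (0 < Q →
        Finset.univ.inf' ⟨0, Finset.mem_univ 0⟩
            (fun s : Fin m => 2 * ((Nv (s - 1) : ℤ) + (Nv s : ℤ))) ≤ Q
        ∧ 4 ≤ Finset.univ.inf' ⟨0, Finset.mem_univ 0⟩
            (fun s : Fin m => 2 * ((Nv (s - 1) : ℤ) + (Nv s : ℤ)))) := by
  have hm : 0 < m := Nat.pos_of_ne_zero (NeZero.ne m)
  have hvzero : ((0 : Fin m) : ℕ) = 0 := Fin.val_zero m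
  -- K 0 = k
  have hK0 : K 0 = k := by
    rw [hK]
    have h0 : Finset.univ.filter (fun t : Fin m => t < (0 : Fin m)) = ∅ := by
      ext u
      simp only [Finset.mem_filter, Finset.mem_univ, true_and, Finset.notMem_empty,
        iff_false, Fin.lt_def, hvzero]
      omega
    rw [h0, Finset.sum_empty, add_zero]
  -- l t = K (t+1) - K t  (cyclic)
  have hl' : ∀ t : Fin m, l t = K (t + 1) - K t := by
    intro t
    have hval : ((t + 1 : Fin m) : ℕ) = ((t : ℕ) + 1) % m := by
      rw [Fin.add_def]
      simp only [Fin.val_one']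
      rw [Nat.add_mod, Nat.mod_mod, ← Nat.add_mod]
    rcases Nat.lt_or_ge ((t : ℕ) + 1) m with h | h
    · -- t.val + 1 < m
      have hv : ((t + 1 : Fin m) : ℕ) = (t : ℕ) + 1 := by
        rw [hval, Nat.mod_eq_of_lt h]
      have hfil : Finset.univ.filter (fun u : Fin m => u < t + 1)
          = insert t (Finset.univ.filter (fun u : Fin m => u < t)) := by
        ext u
        simp only [Finset.mem_filter, Finset.mem_univ, true_and, Finset.mem_insert,
          Fin.lt_def, hv, Fin.ext_iff]
        omega
      have hnotmem : t ∉ Finset.univ.filter (fun u : Fin m => u < t) := by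
        simp only [Finset.mem_filter, Finset.mem_univ, true_and]
        exact lt_irrefl t
      rw [hK (t + 1), hK t, hfil, Finset.sum_insert hnotmem]
      ring
    · -- t.val + 1 = m, so t + 1 = 0
      have hteq : (t : ℕ) + 1 = m := by have := t.isLt; omega
      have ht1 : t + 1 = (0 : Fin m) := by
        rw [Fin.ext_iff, hval, hteq, Nat.mod_self, hvzero]
      rw [ht1, hK0, hK t]
      have hfil : Finset.univ.filter (fun u : Fin m => u < t)
          = Finset.univ.erase t := by
        ext u
        simp only [Finset.mem_filter, Finset.mem_univ, true_and, Finset.mem_erase,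
          and_true, Fin.lt_def, Fin.ext_iff, ne_eq]
        have := u.isLt
        omega
      have hsum := Finset.sum_erase_add Finset.univ l (Finset.mem_univ t)
      rw [hl] at hsum
      rw [hfil]
      linarith
  -- inner sum computation
  have hinner : ∀ t : Fin m,
      (∑ s : Fin m, (Int.sign (((t : ℕ) : ℤ) - ((s : ℕ) : ℤ))) * l s)
        = 2 * (K t - k) + l t := by
    intro t
    have hdecomp : ∀ s : Fin m,
        (Int.sign (((t : ℕ) : ℤ) - ((s : ℕ) : ℤ))) * l s
        = l s - (if s = t then l s else 0) - 2 * (if t < s then l s else 0) := by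
      intro s
      rcases lt_trichotomy ((s : ℕ)) ((t : ℕ)) with h | h | h
      · have hs : (0 : ℤ) < ((t : ℕ) : ℤ) - ((s : ℕ) : ℤ) := by omega
        rw [Int.sign_eq_one_of_pos hs]
        have h1 : ¬ (s = t) := by rw [Fin.ext_iff]; omega
        have h2 : ¬ (t < s) := by rw [Fin.lt_def]; omega
        simp only [h1, h2, if_false]
        ring
      · have hs : ((t : ℕ) : ℤ) - ((s : ℕ) : ℤ) = 0 := by omega
        rw [hs, Int.sign_zero]
        have h1 : s = t := by rw [Fin.ext_iff]; omega
        subst h1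
        simp [lt_irrefl]
      · have hs : ((t : ℕ) : ℤ) - ((s : ℕ) : ℤ) < 0 := by omega
        rw [Int.sign_eq_neg_one_of_neg hs]
        have h1 : ¬ (s = t) := by rw [Fin.ext_iff]; omega
        have h2 : t < s := by rw [Fin.lt_def]; omega
        simp only [h1, h2, if_false, if_true]
        ring
    rw [Finset.sum_congr rfl (fun s _ => hdecomp s)]
    rw [Finset.sum_sub_distrib, Finset.sum_sub_distrib, hl]
    have e1 : (∑ s : Fin m, (if s = t then l s else 0)) = l t := by
      rw [Finset.sum_ite_eq' Finset.univ t l, if_pos (Finset.mem_univ t)]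
    have e2 : (∑ s : Fin m, 2 * (if t < s then l s else 0))
        = 2 * ∑ s ∈ Finset.univ.filter (fun s => t < s), l s := by
      rw [Finset.mul_sum, Finset.sum_filter]
      exact Finset.sum_congr rfl fun s _ => by split <;> ring
    have e3 : (∑ s ∈ Finset.univ.filter (fun s => t < s), l s)
        + (∑ s ∈ Finset.univ.filter (fun s => ¬ t < s), l s) = 0 := by
      rw [Finset.sum_filter_add_sum_filter_not, hl]
    have e4 : Finset.univ.filter (fun s : Fin m => ¬ t < s)
        = insert t (Finset.univ.filter (fun s : Fin m => s < t)) := by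
      ext u
      simp only [Finset.mem_filter, Finset.mem_univ, true_and, Finset.mem_insert,
        Fin.lt_def, Fin.ext_iff, not_lt]
      omega
    have hnotmem : t ∉ Finset.univ.filter (fun u : Fin m => u < t) := by
      simp only [Finset.mem_filter, Finset.mem_univ, true_and]
      exact lt_irrefl t
    have e5 : (∑ s ∈ Finset.univ.filter (fun s : Fin m => ¬ t < s), l s)
        = l t + (K t - k) := by
      rw [e4, Finset.sum_insert hnotmem, hK t]
      ring
    rw [e5] at e3
    rw [e1, e2]
    linarith
  -- abbreviations
  set A := ∑ t : Fin m, (Nv t : ℤ) * K t with hA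
  set B := ∑ t : Fin m, (Nv (t - 1) : ℤ) * K t with hB
  set C := ∑ t : Fin m, (Nv t : ℤ) * l t with hC
  -- swap the double sum
  have hS : (∑ s : Fin m, ∑ t : Fin m,
      (Int.sign (((t : ℕ) : ℤ) - ((s : ℕ) : ℤ))) * (Nv t : ℤ) * l s)
      = ∑ t : Fin m, (Nv t : ℤ) * (2 * (K t - k) + l t) := by
    rw [Finset.sum_comm]
    refine Finset.sum_congr rfl fun t _ => ?_
    rw [← hinner t, Finset.mul_sum]
    exact Finset.sum_congr rfl fun s _ => by ring
  have hshift : (∑ t : Fin m, (Nv t : ℤ) * K (t + 1)) = B := by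
    rw [hB]
    have h := Equiv.sum_comp (Equiv.addRight (1 : Fin m))
      (fun u : Fin m => (Nv (u - 1) : ℤ) * K u)
    simp only [Equiv.coe_addRight, add_sub_cancel_right] at h
    exact h
  have hCeq : C = B - A := by
    rw [hC, ← hshift, hA, ← Finset.sum_sub_distrib]
    exact Finset.sum_congr rfl fun t _ => by rw [hl' t]; ring
  have hNsum : (∑ t : Fin m, (Nv t : ℤ)) = (N : ℤ) := by
    rw [hN]
    push_cast
    rfl
  have h1 : (∑ t : Fin m, (Nv t : ℤ) * (2 * (K t - k) + l t))
      = 2 * A - 2 * k * (N : ℤ) + C := by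
    rw [hA, hC, ← hNsum, Finset.mul_sum, Finset.mul_sum,
      ← Finset.sum_sub_distrib, ← Finset.sum_add_distrib]
    exact Finset.sum_congr rfl fun t _ => by ring
  have hRHS : (∑ s : Fin m, 2 * ((Nv (s - 1) : ℤ) + (Nv s : ℤ)) * K s)
      = 2 * B + 2 * A := by
    rw [hA, hB, Finset.mul_sum, Finset.mul_sum, ← Finset.sum_add_distrib]
    exact Finset.sum_congr rfl fun s _ => by ring
  -- THE KEY IDENTITY
  have key : Q = ∑ s : Fin m, 2 * ((Nv (s - 1) : ℤ) + (Nv s : ℤ)) * K s := by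
    rw [hQ, hS, h1, hCeq, hRHS]
    ring
  -- termwise bounds
  have hcoef : ∀ s : Fin m, (4 : ℤ) ≤ 2 * ((Nv (s - 1) : ℤ) + (Nv s : ℤ)) := by
    intro s
    have h1 : (1 : ℤ) ≤ (Nv (s - 1) : ℤ) := by exact_mod_cast hNv (s - 1)
    have h2 : (1 : ℤ) ≤ (Nv s : ℤ) := by exact_mod_cast hNv s
    linarith
  have hterm : ∀ s : Fin m, 4 * K s ≤ 2 * ((Nv (s - 1) : ℤ) + (Nv s : ℤ)) * K s :=
    fun s => mul_le_mul_of_nonneg_right (hcoef s) (hKnonneg s)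
  have htermnn : ∀ s : Fin m, 0 ≤ 2 * ((Nv (s - 1) : ℤ) + (Nv s : ℤ)) * K s :=
    fun s => mul_nonneg (by linarith [hcoef s]) (hKnonneg s)
  refine ⟨⟨?_, ?_⟩, ⟨?_, ?_⟩, ?_⟩
  · -- 4 ∑ K ≤ Q
    rw [key, Finset.mul_sum]
    exact Finset.sum_le_sum fun s _ => hterm s
  · -- 0 ≤ 4 ∑ K
    have : (0 : ℤ) ≤ ∑ s, K s := Finset.sum_nonneg fun s _ => hKnonneg s
    linarith
  · -- Q = 0 → k = 0 ∧ ∀ s, l s = 0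
    intro hQ0
    have hzero : ∀ s ∈ Finset.univ, 2 * ((Nv (s - 1) : ℤ) + (Nv s : ℤ)) * K s = 0 := by
      rw [key] at hQ0
      exact (Finset.sum_eq_zero_iff_of_nonneg fun s _ => htermnn s).mp hQ0
    have hKzero : ∀ s : Fin m, K s = 0 := by
      intro s
      have h0 := hzero s (Finset.mem_univ s)
      have hc : (2 : ℤ) * ((Nv (s - 1) : ℤ) + (Nv s : ℤ)) ≠ 0 := by
        have := hcoef s; intro hcc; rw [hcc] at this; norm_num at this
      exact (mul_eq_zero.mp h0).resolve_left hc
    exact ⟨by rw [← hK0, hKzero], fun s => by rw [hl' s, hKzero, hKzero, sub_zero]⟩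
  · -- k = 0 ∧ l = 0 → Q = 0
    rintro ⟨hk0, hl0⟩
    rw [key]
    apply Finset.sum_eq_zero
    intro s _
    have hKs : K s = 0 := by
      rw [hK s, hk0, Finset.sum_eq_zero fun t _ => hl0 t, add_zero]
    rw [hKs, mul_zero]
  · -- 0 < Q → inf' ≤ Q ∧ 4 ≤ inf'
    intro hQpos
    constructor
    · -- inf' ≤ Q
      have hex : ∃ s : Fin m, 0 < K s := by
        by_contra hcon
        push_neg at hcon
        have hK0' : ∀ s : Fin m, K s = 0 := fun s => le_antisymm (hcon s) (hKnonneg s)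
        have hQz : Q = 0 := by
          rw [key]
          exact Finset.sum_eq_zero fun s _ => by rw [hK0' s, mul_zero]
        omega
      obtain ⟨s, hs⟩ := hex
      have hKs1 : (1 : ℤ) ≤ K s := hs
      have hsingle : 2 * ((Nv (s - 1) : ℤ) + (Nv s : ℤ)) * K s ≤ Q := by
        rw [key]
        exact Finset.single_le_sum (fun t _ => htermnn t) (Finset.mem_univ s)
      have hge : 2 * ((Nv (s - 1) : ℤ) + (Nv s : ℤ))
          ≤ 2 * ((Nv (s - 1) : ℤ) + (Nv s : ℤ)) * K s := by
        nlinarith [hcoef s]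
      calc Finset.univ.inf' ⟨0, Finset.mem_univ 0⟩
            (fun s : Fin m => 2 * ((Nv (s - 1) : ℤ) + (Nv s : ℤ)))
          ≤ 2 * ((Nv (s - 1) : ℤ) + (Nv s : ℤ)) :=
            Finset.inf'_le _ (Finset.mem_univ s)
        _ ≤ Q := le_trans hge hsingle
    · exact Finset.le_inf' _ _ fun s _ => hcoef s
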